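/- Let (Y_j)_{j≥1} be a sequence of independent random variables on a probability space, each uniformly distributed on [−1/2, 1/2], and let (a_j)_{j≥1} be a real sequence with ∑_{j≥1} |a_j| < ∞. Then the fourth moment of the almost surely absolutely convergent random series W := ∑_{j≥1} Y_j a_j satisfies E[W⁴] = (1/80) ∑_{j≥1} a_j⁴ + (1/24) ∑_{j≥1} ∑_{k≥j+1} a_j² a_k². -/

import Mathlib

open MeasureTheory ProbabilityTheory Filter Finset Topology

theorem stmt_6
    {Ω : Type*} [MeasurableSpace Ω] (P : Measure Ω) [IsProbabilityMeasure P]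
    (Y : ℕ → Ω → ℝ) (hYmeas : ∀ j, Measurable (Y j))
    (hYindep : iIndepFun Y P)
    (hYunif : ∀ j, Measure.map (Y j) P = volume.restrict (Set.Icc (-(1/2) : ℝ) (1/2)))
    (a : ℕ → ℝ) (ha : Summable fun j => |a j|) :
    (∀ᵐ ω ∂P, Summable (fun j => |Y j ω * a j|)) ∧
    ∫ ω, (∑' j, Y j ω * a j) ^ 4 ∂P
      = (1 / 80) * ∑' j, (a j) ^ 4
        + (1 / 24) * ∑' j, ∑' k, (if j < k then (a j) ^ 2 * (a k) ^ 2 else 0) := by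
  classical
  set B : ℝ := ∑' j, |a j| with hBdef
  have hB0 : 0 ≤ B := tsum_nonneg fun j => abs_nonneg _
  have haB : ∀ j, |a j| ≤ B := fun j => ha.le_tsum j fun k _ => abs_nonneg _
  -- a.e. bound on Y j
  have hYbdd : ∀ j, ∀ᵐ ω ∂P, |Y j ω| ≤ 1/2 := by
    intro j
    have hset : MeasurableSet (Set.Icc (-(1/2):ℝ) (1/2)) := measurableSet_Icc
    have h1 : P (Y j ⁻¹' Set.Icc (-(1/2):ℝ) (1/2)) = 1 := by
      have h : Measure.map (Y j) P (Set.Icc (-(1/2):ℝ) (1/2))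
          = P (Y j ⁻¹' Set.Icc (-(1/2):ℝ) (1/2)) := Measure.map_apply (hYmeas j) hset
      rw [hYunif j] at h
      rw [← h, Measure.restrict_apply hset, Set.inter_self, Real.volume_Icc]
      norm_num
    have h2 : P (Y j ⁻¹' Set.Icc (-(1/2):ℝ) (1/2))ᶜ = 0 :=
      (prob_compl_eq_zero_iff ((hYmeas j) hset)).2 h1
    refine (ae_iff.2 ?_)
    have : {ω | ¬ |Y j ω| ≤ 1/2} ⊆ (Y j ⁻¹' Set.Icc (-(1/2):ℝ) (1/2))ᶜ := by
      intro ω hω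
      simp only [Set.mem_compl_iff, Set.mem_preimage, Set.mem_Icc]
      intro hc
      exact hω (abs_le.2 ⟨by linarith [hc.1], hc.2⟩)
    exact measure_mono_null this h2
  have hA : ∀ᵐ ω ∂P, ∀ j, |Y j ω| ≤ 1/2 := ae_all_iff.2 hYbdd
  -- first conjunct
  have hsumm : ∀ ω, (∀ j, |Y j ω| ≤ 1/2) → Summable (fun j => |Y j ω * a j|) := by
    intro ω hω
    refine Summable.of_nonneg_of_le (fun j => abs_nonneg _) (fun j => ?_) ha
    rw [abs_mul]
    calc |Y j ω| * |a j| ≤ (1/2) * |a j| :=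
          mul_le_mul_of_nonneg_right (hω j) (abs_nonneg _)
      _ ≤ 1 * |a j| := by
          have := abs_nonneg (a j); nlinarith
      _ = |a j| := one_mul _
  have conj1 : ∀ᵐ ω ∂P, Summable (fun j => |Y j ω * a j|) :=
    hA.mono fun ω hω => hsumm ω hω
  refine ⟨conj1, ?_⟩
  -- moments of Y
  have hmom : ∀ j (k : ℕ), ∫ ω, (Y j ω) ^ k ∂P
      = ((1/2:ℝ)^(k+1) - (-(1/2):ℝ)^(k+1)) / (k+1) := by
    intro j k
    have h1 : ∫ ω, (Y j ω) ^ k ∂P = ∫ x, x ^ k ∂(Measure.map (Y j) P) :=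
      (integral_map (hYmeas j).aemeasurable
        ((measurable_id.pow_const k).aestronglyMeasurable)).symm
    rw [h1, hYunif j]
    have h2 : ∫ x in Set.Icc (-(1/2):ℝ) (1/2), x ^ k = ∫ x in (-(1/2):ℝ)..(1/2), x ^ k := by
      rw [integral_Icc_eq_integral_Ioc, ← intervalIntegral.integral_of_le (by norm_num)]
    rw [h2, integral_pow]
  -- the summands and partial sums
  set f : ℕ → Ω → ℝ := fun j ω => a j * Y j ω with hfdef
  have hfmeas : ∀ j, Measurable (f j) := fun j => (hYmeas j).const_mul (a j)
  have hfindep : iIndepFun f P :=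
    hYindep.comp (fun j x => a j * x) (fun j => measurable_id.const_mul (a j))
  set S : ℕ → Ω → ℝ := fun n ω => ∑ j ∈ Finset.range n, f j ω with hSdef
  have hSmeas : ∀ n, Measurable (S n) := fun n =>
    Finset.measurable_sum _ (fun j _ => hfmeas j)
  -- a.e. bounds
  have hfbd : ∀ᵐ ω ∂P, ∀ n, |f n ω| ≤ B := by
    filter_upwards [hA] with ω hω n
    rw [hfdef]
    simp only [abs_mul]
    calc |a n| * |Y n ω| ≤ |a n| * (1/2) := mul_le_mul_of_nonneg_left (hω n) (abs_nonneg _)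
      _ ≤ |a n| * 1 := by nlinarith [abs_nonneg (a n)]
      _ ≤ B := by rw [mul_one]; exact haB n
  have hSbd : ∀ᵐ ω ∂P, ∀ n, |S n ω| ≤ B := by
    filter_upwards [hA] with ω hω n
    calc |S n ω| ≤ ∑ j ∈ Finset.range n, |f j ω| := Finset.abs_sum_le_sum_abs _ _
      _ ≤ ∑ j ∈ Finset.range n, |a j| := by
          refine Finset.sum_le_sum fun j _ => ?_
          rw [hfdef]; simp only [abs_mul]
          calc |a j| * |Y j ω| ≤ |a j| * (1/2) :=
                mul_le_mul_of_nonneg_left (hω j) (abs_nonneg _)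
            _ ≤ |a j| * 1 := by nlinarith [abs_nonneg (a j)]
            _ = |a j| := mul_one _
      _ ≤ B := ha.sum_le_tsum _ (fun j _ => abs_nonneg _)
  -- integrability helper
  have hint : ∀ (g : Ω → ℝ) (C : ℝ), Measurable g → (∀ᵐ ω ∂P, |g ω| ≤ C) →
      Integrable g P := by
    intro g C hg h
    exact (integrable_const C).mono' hg.aestronglyMeasurable
      (h.mono fun ω h => by simpa [Real.norm_eq_abs] using h)
  have hintSf : ∀ n (k m : ℕ), Integrable (fun ω => (S n ω)^k * (f n ω)^m) P := by
    intro n k m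
    refine hint _ (B^k * B^m) (((hSmeas n).pow_const k).mul ((hfmeas n).pow_const m)) ?_
    filter_upwards [hSbd, hfbd] with ω h1 h2
    rw [abs_mul, abs_pow, abs_pow]
    exact mul_le_mul (pow_le_pow_left₀ (abs_nonneg _) (h1 n) k)
      (pow_le_pow_left₀ (abs_nonneg _) (h2 n) m) (by positivity) (by positivity)
  have hintS : ∀ n (k : ℕ), Integrable (fun ω => (S n ω)^k) P := by
    intro n k
    refine hint _ (B^k) ((hSmeas n).pow_const k) ?_
    filter_upwards [hSbd] with ω h1
    rw [abs_pow]; exact pow_le_pow_left₀ (abs_nonneg _) (h1 n) k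
  have hintf : ∀ n (k : ℕ), Integrable (fun ω => (f n ω)^k) P := by
    intro n k
    refine hint _ (B^k) ((hfmeas n).pow_const k) ?_
    filter_upwards [hfbd] with ω h1
    rw [abs_pow]; exact pow_le_pow_left₀ (abs_nonneg _) (h1 n) k
  -- independence of S n and f n
  have hSf : ∀ n, IndepFun (S n) (f n) P := by
    intro n
    have h := hfindep.indepFun_sum_range_succ hfmeas n
    have he : (∑ j ∈ Finset.range n, f j) = S n := by
      funext ω; rw [hSdef]; simp [Finset.sum_apply]
    rwa [he] at h
  have hmul : ∀ n (k m : ℕ), ∫ ω, (S n ω)^k * (f n ω)^m ∂P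
      = (∫ ω, (S n ω)^k ∂P) * (∫ ω, (f n ω)^m ∂P) := by
    intro n k m
    have h := ((hSf n).comp (measurable_id.pow_const k) (measurable_id.pow_const m))
    exact h.integral_mul_eq_mul_integral (((hSmeas n).pow_const k).aestronglyMeasurable)
      (((hfmeas n).pow_const m).aestronglyMeasurable)
  -- moments of f
  have hf1 : ∀ j, ∫ ω, f j ω ∂P = 0 := by
    intro j
    rw [hfdef]
    simp only
    rw [integral_const_mul]
    have := hmom j 1
    simp only [pow_one] at this
    rw [this]; norm_num
  have hf2 : ∀ j, ∫ ω, (f j ω)^2 ∂P = (a j)^2 * (1/12) := by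
    intro j
    rw [hfdef]
    simp only [mul_pow]
    rw [integral_const_mul, hmom j 2]
    norm_num
  have hf3 : ∀ j, ∫ ω, (f j ω)^3 ∂P = 0 := by
    intro j
    rw [hfdef]
    simp only [mul_pow]
    rw [integral_const_mul, hmom j 3]
    norm_num
  have hf4 : ∀ j, ∫ ω, (f j ω)^4 ∂P = (a j)^4 * (1/80) := by
    intro j
    rw [hfdef]
    simp only [mul_pow]
    rw [integral_const_mul, hmom j 4]
    norm_num
  -- first moment of S
  have hE1 : ∀ n, ∫ ω, S n ω ∂P = 0 := by
    intro n
    rw [hSdef]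
    simp only
    rw [integral_finset_sum _ (fun j _ => hint (f j) B (hfmeas j)
      (hfbd.mono fun ω h => h j))]
    exact Finset.sum_eq_zero fun j _ => hf1 j
  -- second moment of S
  have hE2 : ∀ n, ∫ ω, (S n ω)^2 ∂P = (1/12) * ∑ j ∈ Finset.range n, (a j)^2 := by
    intro n
    induction n with
    | zero => simp [hSdef]
    | succ n ih =>
      have hexp : (fun ω => (S (n+1) ω)^2)
          = fun ω => (S n ω)^2 + (2*((S n ω)^1*(f n ω)^1) + (S n ω)^0 * (f n ω)^2) := by
        funext ω
        have h : S (n+1) ω = S n ω + f n ω := Finset.sum_range_succ _ n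
        rw [h]; ring
      have I11 : Integrable (fun ω => 2*((S n ω)^1*(f n ω)^1)) P :=
        (hintSf n 1 1).const_mul 2
      have I02 : Integrable (fun ω => (S n ω)^0 * (f n ω)^2) P := hintSf n 0 2
      have Irest : Integrable (fun ω => 2*((S n ω)^1*(f n ω)^1) + (S n ω)^0 * (f n ω)^2) P :=
        I11.add I02
      rw [hexp, integral_add (hintS n 2) Irest, integral_add I11 I02,
        integral_const_mul, hmul n 1 1, hmul n 0 2]
      simp only [pow_one, pow_zero]
      rw [hE1 n, ih, hf2 n, Finset.sum_range_succ]
      simp only [integral_const, measure_univ, probReal_univ, ENNReal.toReal_one, smul_eq_mul]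
      ring
  -- fourth moment of S
  have hE4 : ∀ n, ∫ ω, (S n ω)^4 ∂P
      = (1/80) * ∑ j ∈ Finset.range n, (a j)^4
        + (1/24) * ∑ j ∈ Finset.range n, (a j)^2 * ∑ k ∈ Finset.range j, (a k)^2 := by
    intro n
    induction n with
    | zero => simp [hSdef]
    | succ n ih =>
      have hexp : (fun ω => (S (n+1) ω)^4)
          = fun ω => (S n ω)^4 + (4*((S n ω)^3*(f n ω)^1)
            + (6*((S n ω)^2*(f n ω)^2) + (4*((S n ω)^1*(f n ω)^3)
              + (S n ω)^0 * (f n ω)^4))) := by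
        funext ω
        have h : S (n+1) ω = S n ω + f n ω := Finset.sum_range_succ _ n
        rw [h]; ring
      have i31 : Integrable (fun ω => 4*((S n ω)^3*(f n ω)^1)) P :=
        (hintSf n 3 1).const_mul 4
      have i22 : Integrable (fun ω => 6*((S n ω)^2*(f n ω)^2)) P :=
        (hintSf n 2 2).const_mul 6
      have i13 : Integrable (fun ω => 4*((S n ω)^1*(f n ω)^3)) P :=
        (hintSf n 1 3).const_mul 4
      have i04 : Integrable (fun ω => (S n ω)^0 * (f n ω)^4) P := hintSf n 0 4
      have r3 : Integrable (fun ω => 4*((S n ω)^1*(f n ω)^3) + (S n ω)^0 * (f n ω)^4) P :=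
        i13.add i04
      have r2 : Integrable (fun ω => 6*((S n ω)^2*(f n ω)^2)
          + (4*((S n ω)^1*(f n ω)^3) + (S n ω)^0 * (f n ω)^4)) P := i22.add r3
      have r1 : Integrable (fun ω => 4*((S n ω)^3*(f n ω)^1)
          + (6*((S n ω)^2*(f n ω)^2)
            + (4*((S n ω)^1*(f n ω)^3) + (S n ω)^0 * (f n ω)^4))) P := i31.add r2
      rw [hexp,
        integral_add (hintS n 4) r1,
        integral_add i31 r2,
        integral_add i22 r3,
        integral_add i13 i04,
        integral_const_mul, integral_const_mul, integral_const_mul,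
        hmul n 3 1, hmul n 2 2, hmul n 1 3, hmul n 0 4]
      simp only [pow_one, pow_zero]
      rw [hE1 n, hE2 n, ih, hf1 n, hf2 n, hf3 n, hf4 n]
      simp only [integral_const, measure_univ, probReal_univ, ENNReal.toReal_one, smul_eq_mul]
      rw [Finset.sum_range_succ (fun j => (a j)^4),
        Finset.sum_range_succ (fun j => (a j)^2 * ∑ k ∈ Finset.range j, (a k)^2)]
      ring
  -- summability facts
  have hsq : Summable (fun j => (a j)^2) := by
    refine Summable.of_nonneg_of_le (fun j => sq_nonneg _) (fun j => ?_) (ha.mul_left B)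
    rw [← sq_abs]
    calc |a j|^2 = |a j| * |a j| := sq (|a j|)
      _ ≤ B * |a j| := mul_le_mul_of_nonneg_right (haB j) (abs_nonneg _)
  have h4 : Summable (fun j => (a j)^4) := by
    refine Summable.of_nonneg_of_le (fun j => by positivity) (fun j => ?_) (hsq.mul_left (B^2))
    rw [show (a j)^4 = (a j)^2 * (a j)^2 by ring]
    refine mul_le_mul_of_nonneg_right ?_ (sq_nonneg _)
    rw [← sq_abs]
    exact pow_le_pow_left₀ (abs_nonneg _) (haB j) 2
  set g : ℕ × ℕ → ℝ := fun p => if p.1 < p.2 then (a p.1)^2 * (a p.2)^2 else 0 with hgdef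
  have hgsum : Summable g := by
    refine Summable.of_nonneg_of_le (fun p => ?_) (fun p => ?_)
      (hsq.mul_of_nonneg hsq (fun j => sq_nonneg _) (fun j => sq_nonneg _))
    · rw [hgdef]; dsimp only; split_ifs
      · positivity
      · exact le_refl 0
    · rw [hgdef]; dsimp only; split_ifs
      · exact le_refl _
      · positivity
  -- a.e. convergence of partial sums
  have hconv : ∀ᵐ ω ∂P, Tendsto (fun n => (S n ω)^4) atTop
      (𝓝 ((∑' j, Y j ω * a j)^4)) := by
    filter_upwards [hA] with ω hω
    have hs : Summable (fun j => Y j ω * a j) := (hsumm ω hω).of_abs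
    have ht : Tendsto (fun n => ∑ j ∈ Finset.range n, Y j ω * a j) atTop
        (𝓝 (∑' j, Y j ω * a j)) := hs.hasSum.tendsto_sum_nat
    have he : (fun n => ∑ j ∈ Finset.range n, Y j ω * a j) = fun n => S n ω := by
      funext n; rw [hSdef]; exact Finset.sum_congr rfl fun j _ => mul_comm _ _
    rw [he] at ht
    exact ht.pow 4
  -- dominated convergence
  have hL1 : Tendsto (fun n => ∫ ω, (S n ω)^4 ∂P) atTop
      (𝓝 (∫ ω, (∑' j, Y j ω * a j)^4 ∂P)) := by
    refine tendsto_integral_of_dominated_convergence (fun _ => B^4)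
      (fun n => ((hSmeas n).pow_const 4).aestronglyMeasurable)
      (integrable_const _) (fun n => ?_) hconv
    filter_upwards [hSbd] with ω h1
    rw [Real.norm_eq_abs, abs_pow]
    exact pow_le_pow_left₀ (abs_nonneg _) (h1 n) 4
  -- limit of RHS partial sums
  have hD : ∀ n, ∑ j ∈ Finset.range n, (a j)^2 * ∑ k ∈ Finset.range j, (a k)^2
      = ∑ p ∈ Finset.range n ×ˢ Finset.range n, g p := by
    intro n
    rw [Finset.sum_product]
    rw [Finset.sum_comm]
    refine Finset.sum_congr rfl fun k hk => ?_
    have hkn : k ≤ n := le_of_lt (Finset.mem_range.1 hk)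
    have hfil : (Finset.range n).filter (fun j => j < k) = Finset.range k := by
      ext j; simp only [Finset.mem_filter, Finset.mem_range]; omega
    calc (a k)^2 * ∑ j ∈ Finset.range k, (a j)^2
        = ∑ j ∈ Finset.range k, (a j)^2 * (a k)^2 := by
          rw [Finset.mul_sum]; exact Finset.sum_congr rfl fun j _ => mul_comm _ _
      _ = ∑ j ∈ (Finset.range n).filter (fun j => j < k), (a j)^2 * (a k)^2 := by
          rw [hfil]
      _ = ∑ j ∈ Finset.range n, if j < k then (a j)^2 * (a k)^2 else 0 :=
          (Finset.sum_filter _ _)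
      _ = ∑ j ∈ Finset.range n, g (j, k) := rfl
  have hrect : Tendsto (fun n => ∑ p ∈ Finset.range n ×ˢ Finset.range n, g p) atTop
      (𝓝 (∑' p, g p)) := by
    have hmono : Monotone (fun n => Finset.range n ×ˢ Finset.range n) := fun m n h =>
      Finset.product_subset_product (Finset.range_subset_range.2 h) (Finset.range_subset_range.2 h)
    have hcov : ∀ p : ℕ × ℕ, ∃ n, p ∈ Finset.range n ×ˢ Finset.range n := by
      intro p
      exact ⟨max p.1 p.2 + 1, by simp only [Finset.mem_product, Finset.mem_range]; omega⟩
    exact hgsum.hasSum.comp (tendsto_atTop_finset_of_monotone hmono hcov)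
  have htsum_eq : ∑' p, g p = ∑' j, ∑' k, (if j < k then (a j)^2 * (a k)^2 else 0) :=
    hgsum.tsum_prod' (fun b => (hgsum.prod_factor b))
  have hL2 : Tendsto (fun n => ∫ ω, (S n ω)^4 ∂P) atTop
      (𝓝 ((1 / 80) * ∑' j, (a j) ^ 4
        + (1 / 24) * ∑' j, ∑' k, (if j < k then (a j) ^ 2 * (a k) ^ 2 else 0))) := by
    have heq : (fun n => ∫ ω, (S n ω)^4 ∂P)
        = fun n => (1/80) * ∑ j ∈ Finset.range n, (a j)^4
          + (1/24) * ∑ p ∈ Finset.range n ×ˢ Finset.range n, g p := by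
      funext n; rw [hE4 n, hD n]
    rw [heq, ← htsum_eq]
    exact ((h4.hasSum.tendsto_sum_nat.const_mul (1/80 : ℝ))).add
      (hrect.const_mul (1/24 : ℝ))
  exact tendsto_nhds_unique hL1 hL2
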